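/- Let p be a prime, let T ≤ GL₂(ℚ_p) be the subgroup of invertible diagonal matrices, and set u_j = [[1, p^{−j}], [0, 1]] for j ∈ ℕ and w = [[0, 1], [1, 0]]. Then the double cosets T u_j I_p (j ≥ 0), T u_j w I_p (j ≥ 0), and T w I_p are pairwise disjoint and their union is GL₂(ℚ_p); that is, they form a complete set of distinct representatives of T\GL₂(ℚ_p)/I_p. -/

import Mathlib

/-- The matrix `u_j = [[1, p^{−j}], [0, 1]]` over `ℚ_p`. -/
noncomputable def uMat (p : ℕ) [Fact (Nat.Prime p)] (j : ℕ) : Matrix (Fin 2) (Fin 2) ℚ_[p] :=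
  !![1, (p : ℚ_[p]) ^ (-(j:ℤ)); 0, 1]

/-- The maximal compact subgroup `K_p = GL₂(ℤ_p)`, viewed as the set of invertible matrices
`k` over `ℚ_p` such that all entries of `k` and of `k⁻¹` have norm at most `1`. -/
def Kp (p : ℕ) [Fact (Nat.Prime p)] : Set (Matrix (Fin 2) (Fin 2) ℚ_[p]) :=
  {k | IsUnit k ∧ ∀ i j, ‖k i j‖ ≤ 1 ∧ ‖k⁻¹ i j‖ ≤ 1}

/-- The Iwahori subgroup: elements of `K_p` whose lower-left entry has norm `< 1`. -/
def Ip (p : ℕ) [Fact (Nat.Prime p)] : Set (Matrix (Fin 2) (Fin 2) ℚ_[p]) :=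
  {k | k ∈ Kp p ∧ ‖k 1 0‖ < 1}

/-- Representatives of `T\GL₂(ℚ_p)/I_p`: the families `u_j` (j ≥ 0), `u_j·w` (j ≥ 0),
and `w`, where `w = [[0,1],[1,0]]`. -/
noncomputable def rep17 (p : ℕ) [Fact (Nat.Prime p)] :
    ℕ ⊕ ℕ ⊕ Unit → Matrix (Fin 2) (Fin 2) ℚ_[p]
  | Sum.inl j => uMat p j
  | Sum.inr (Sum.inl j) => uMat p j * !![0, 1; 1, 0]
  | Sum.inr (Sum.inr _) => !![0, 1; 1, 0]

open Matrix

variable {p : ℕ} [Fact (Nat.Prime p)]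

lemma norm_add_eq_left {x y : ℚ_[p]} (h : ‖y‖ < ‖x‖) : ‖x + y‖ = ‖x‖ := by
  rw [Padic.add_eq_max_of_ne (ne_of_gt h)]; exact max_eq_left h.le

lemma norm_det_le_one {k : Matrix (Fin 2) (Fin 2) ℚ_[p]}
    (h : ∀ i j, ‖k i j‖ ≤ 1) : ‖k.det‖ ≤ 1 := by
  rw [Matrix.det_fin_two, sub_eq_add_neg]
  refine le_trans (Padic.nonarchimedean _ _) (max_le ?_ ?_)
  · calc ‖k 0 0 * k 1 1‖ = ‖k 0 0‖ * ‖k 1 1‖ := norm_mul _ _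
      _ ≤ 1 * 1 := mul_le_mul (h 0 0) (h 1 1) (norm_nonneg _) zero_le_one
      _ = 1 := by ring
  · rw [norm_neg]
    calc ‖k 0 1 * k 1 0‖ = ‖k 0 1‖ * ‖k 1 0‖ := norm_mul _ _
      _ ≤ 1 * 1 := mul_le_mul (h 0 1) (h 1 0) (norm_nonneg _) zero_le_one
      _ = 1 := by ring

lemma Ip_norms {k : Matrix (Fin 2) (Fin 2) ℚ_[p]} (hk : k ∈ Ip p) :
    ‖k.det‖ = 1 ∧ ‖k 0 0‖ = 1 ∧ ‖k 1 1‖ = 1 ∧ ‖k 0 1‖ ≤ 1 ∧ ‖k 1 0‖ < 1 := by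
  obtain ⟨⟨hu, hb⟩, hlow⟩ := hk
  have hdu : IsUnit k.det := (Matrix.isUnit_iff_isUnit_det _).mp hu
  have h1 : k.det * k⁻¹.det = 1 := by
    rw [← Matrix.det_mul, Matrix.mul_nonsing_inv _ hdu, Matrix.det_one]
  have hle : ‖k.det‖ ≤ 1 := norm_det_le_one (fun i j => (hb i j).1)
  have hle' : ‖k⁻¹.det‖ ≤ 1 := norm_det_le_one (fun i j => (hb i j).2)
  have hprod : ‖k.det‖ * ‖k⁻¹.det‖ = 1 := by
    rw [← norm_mul, h1]; simp
  have hdet : ‖k.det‖ = 1 := by nlinarith [norm_nonneg k.det, norm_nonneg k⁻¹.det]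
  have hsm : ‖k 0 1 * k 1 0‖ < 1 := by
    calc ‖k 0 1 * k 1 0‖ = ‖k 0 1‖ * ‖k 1 0‖ := norm_mul _ _
      _ ≤ 1 * ‖k 1 0‖ := by
        exact mul_le_mul_of_nonneg_right (hb 0 1).1 (norm_nonneg _)
      _ < 1 := by simpa using hlow
  have hdiag : ‖k 0 0 * k 1 1‖ = 1 := by
    have : k 0 0 * k 1 1 = k.det + k 0 1 * k 1 0 := by
      rw [Matrix.det_fin_two]; ring
    rw [this, norm_add_eq_left (by rw [hdet]; exact hsm), hdet]
  have h00 : ‖k 0 0‖ = 1 := by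
    rw [norm_mul] at hdiag
    nlinarith [(hb 0 0).1, (hb 1 1).1, norm_nonneg (k 0 0), norm_nonneg (k 1 1)]
  have h11 : ‖k 1 1‖ = 1 := by
    rw [norm_mul, h00, one_mul] at hdiag; exact hdiag
  exact ⟨hdet, h00, h11, (hb 0 1).1, hlow⟩

/-- membership criterion -/
lemma mem_Ip_aux {x y z w : ℚ_[p]} (hdet : ‖x*w - y*z‖ = 1) (hy : ‖y‖ ≤ 1)
    (hz : ‖z‖ < 1) (hw : ‖w‖ = 1) : !![x,y;z,w] ∈ Ip p := by
  have hxw : ‖x * w‖ = 1 := by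
    have hyz : ‖y * z‖ < 1 := by
      calc ‖y*z‖ = ‖y‖*‖z‖ := norm_mul _ _
        _ ≤ 1 * ‖z‖ := mul_le_mul_of_nonneg_right hy (norm_nonneg _)
        _ < 1 := by simpa using hz
    have : x * w = (x*w - y*z) + y*z := by ring
    rw [this, norm_add_eq_left (by rw [hdet]; exact hyz), hdet]
  have hx : ‖x‖ = 1 := by
    rw [norm_mul, hw, mul_one] at hxw; exact hxw
  have hdne : (!![x,y;z,w]).det ≠ 0 := by
    rw [Matrix.det_fin_two_of]
    intro h; rw [h] at hdet; simp at hdet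
  have hu : IsUnit (!![x,y;z,w]) := by
    rw [Matrix.isUnit_iff_isUnit_det]; exact isUnit_iff_ne_zero.mpr hdne
  have hinv : (!![x,y;z,w])⁻¹ = ((!![x,y;z,w]).det)⁻¹ • !![w,-y;-z,x] := by
    rw [Matrix.inv_def, Matrix.adjugate_fin_two_of, Ring.inverse_eq_inv]
  have hdinv : ‖((!![x,y;z,w]).det)⁻¹‖ = 1 := by
    rw [norm_inv, Matrix.det_fin_two_of, hdet]; norm_num
  refine ⟨⟨hu, ?_⟩, by simpa using hz⟩
  intro i j
  constructor
  · fin_cases i <;> fin_cases j <;> simp [hx.le, hy, hz.le, hw.le]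
  · rw [hinv]
    fin_cases i <;> fin_cases j <;>
      simp only [Matrix.smul_apply, Matrix.cons_val', Matrix.cons_val_zero,
        Matrix.cons_val_one, Matrix.head_cons, Matrix.head_fin_const, Matrix.empty_val',
        Matrix.cons_val_fin_one, smul_eq_mul, norm_mul, hdinv, one_mul, norm_neg,
        Matrix.cons_val_one, Matrix.head_cons] <;>
      simp [hx.le, hy, hz.le, hw.le]
noncomputable section
open Matrix

variable {p : ℕ} [Fact (Nat.Prime p)]

/-- two-by-two multiplication entry formula -/
lemma mul2 (A B : Matrix (Fin 2) (Fin 2) ℚ_[p]) (i j : Fin 2) :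
    (A * B) i j = A i 0 * B 0 j + A i 1 * B 1 j := by
  rw [Matrix.mul_apply, Fin.sum_univ_two]

/-- row invariance under right multiplication by Iwahori -/
lemma row_lemma (a b : ℚ_[p]) {k : Matrix (Fin 2) (Fin 2) ℚ_[p]} (hk : k ∈ Ip p) :
    ((‖a * k 0 1 + b * k 1 1‖ ≤ ‖a * k 0 0 + b * k 1 0‖) ↔ (‖b‖ ≤ ‖a‖)) ∧
    max ‖a * k 0 0 + b * k 1 0‖ ‖a * k 0 1 + b * k 1 1‖ = max ‖a‖ ‖b‖ := by
  obtain ⟨hdet, h00, h11, h01, h10⟩ := Ip_norms hk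
  by_cases hba : ‖b‖ ≤ ‖a‖
  · -- a dominant
    have ha' : ‖a * k 0 0 + b * k 1 0‖ = ‖a‖ := by
      rcases eq_or_ne a 0 with rfl | ha0
      · have hb0 : b = 0 := by simpa using hba
        simp [hb0]
      · have hlt : ‖b * k 1 0‖ < ‖a * k 0 0‖ := by
          rw [norm_mul, norm_mul, h00, mul_one]
          calc ‖b‖ * ‖k 1 0‖ ≤ ‖a‖ * ‖k 1 0‖ := mul_le_mul_of_nonneg_right hba (norm_nonneg _)
            _ < ‖a‖ * 1 := mul_lt_mul_of_pos_left h10 (norm_pos_iff.mpr ha0)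
            _ = ‖a‖ := mul_one _
        rw [norm_add_eq_left hlt, norm_mul, h00, mul_one]
    have hb' : ‖a * k 0 1 + b * k 1 1‖ ≤ ‖a‖ := by
      refine le_trans (Padic.nonarchimedean _ _) (max_le ?_ ?_)
      · calc ‖a * k 0 1‖ = ‖a‖ * ‖k 0 1‖ := norm_mul _ _
          _ ≤ ‖a‖ * 1 := mul_le_mul_of_nonneg_left h01 (norm_nonneg _)
          _ = ‖a‖ := mul_one _
      · rw [norm_mul, h11, mul_one]; exact hba
    constructor
    · simp [ha', hb', hba]
    · rw [ha', max_eq_left hb', max_eq_left hba]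
  · push_neg at hba
    have hb0 : b ≠ 0 := by
      intro h; rw [h] at hba; simp at hba; exact absurd hba (not_lt.mpr (norm_nonneg a))
    have hb' : ‖a * k 0 1 + b * k 1 1‖ = ‖b‖ := by
      have hlt : ‖a * k 0 1‖ < ‖b * k 1 1‖ := by
        rw [norm_mul, norm_mul, h11, mul_one]
        calc ‖a‖ * ‖k 0 1‖ ≤ ‖a‖ * 1 := mul_le_mul_of_nonneg_left h01 (norm_nonneg _)
          _ = ‖a‖ := mul_one _
          _ < ‖b‖ := hba
      rw [add_comm, norm_add_eq_left hlt, norm_mul, h11, mul_one]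
    have ha' : ‖a * k 0 0 + b * k 1 0‖ < ‖b‖ := by
      refine lt_of_le_of_lt (Padic.nonarchimedean _ _) (max_lt ?_ ?_)
      · rw [norm_mul, h00, mul_one]; exact hba
      · calc ‖b * k 1 0‖ = ‖b‖ * ‖k 1 0‖ := norm_mul _ _
          _ < ‖b‖ * 1 := mul_lt_mul_of_pos_left h10 (norm_pos_iff.mpr hb0)
          _ = ‖b‖ := mul_one _
    constructor
    · constructor
      · intro h; rw [hb'] at h; exact absurd (lt_of_le_of_lt h ha') (lt_irrefl _)
      · intro h; exact absurd h (not_le.mpr hba)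
    · rw [hb', max_eq_right ha'.le, max_eq_right hba.le]

/-- the invariants -/
def e0 (g : Matrix (Fin 2) (Fin 2) ℚ_[p]) : Prop := ‖g 0 1‖ ≤ ‖g 0 0‖
def e1 (g : Matrix (Fin 2) (Fin 2) ℚ_[p]) : Prop := ‖g 1 1‖ ≤ ‖g 1 0‖
def dl (g : Matrix (Fin 2) (Fin 2) ℚ_[p]) : ℝ :=
  ‖g.det‖ / (max ‖g 0 0‖ ‖g 0 1‖ * max ‖g 1 0‖ ‖g 1 1‖)

lemma invariant_eq {t r k : Matrix (Fin 2) (Fin 2) ℚ_[p]}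
    (ht : IsUnit t ∧ t 0 1 = 0 ∧ t 1 0 = 0) (hk : k ∈ Ip p) :
    (e0 (t * r * k) ↔ e0 r) ∧ (e1 (t * r * k) ↔ e1 r) ∧ dl (t * r * k) = dl r := by
  obtain ⟨htu, ht01, ht10⟩ := ht
  have hdet : t.det = t 0 0 * t 1 1 := by rw [Matrix.det_fin_two, ht01]; ring
  have hdne : t 0 0 * t 1 1 ≠ 0 := by
    rw [← hdet]
    exact (Matrix.isUnit_iff_isUnit_det t).mp htu |>.ne_zero
  have h0 : t 0 0 ≠ 0 := fun h => hdne (by rw [h, zero_mul])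
  have h1 : t 1 1 ≠ 0 := fun h => hdne (by rw [h, mul_zero])
  -- entries of t * r
  have htr : ∀ j, (t * r) 0 j = t 0 0 * r 0 j ∧ (t * r) 1 j = t 1 1 * r 1 j := by
    intro j; rw [mul2, mul2, ht01, ht10]; constructor <;> ring
  -- rows of (t*r*k)
  have hrow0 := row_lemma ((t*r) 0 0) ((t*r) 0 1) hk
  have hrow1 := row_lemma ((t*r) 1 0) ((t*r) 1 1) hk
  have he00 : (t*r*k) 0 0 = (t*r) 0 0 * k 0 0 + (t*r) 0 1 * k 1 0 := mul2 _ _ _ _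
  have he01 : (t*r*k) 0 1 = (t*r) 0 0 * k 0 1 + (t*r) 0 1 * k 1 1 := mul2 _ _ _ _
  have he10 : (t*r*k) 1 0 = (t*r) 1 0 * k 0 0 + (t*r) 1 1 * k 1 0 := mul2 _ _ _ _
  have he11 : (t*r*k) 1 1 = (t*r) 1 0 * k 0 1 + (t*r) 1 1 * k 1 1 := mul2 _ _ _ _
  have ht0 : (0:ℝ) < ‖t 0 0‖ := norm_pos_iff.mpr h0
  have ht1 : (0:ℝ) < ‖t 1 1‖ := norm_pos_iff.mpr h1
  refine ⟨?_, ?_, ?_⟩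
  · rw [e0, e0, he00, he01, hrow0.1, (htr 0).1, (htr 1).1,
      norm_mul, norm_mul]
    exact mul_le_mul_iff_right₀ ht0
  · rw [e1, e1, he10, he11, hrow1.1, (htr 0).2, (htr 1).2,
      norm_mul, norm_mul]
    exact mul_le_mul_iff_right₀ ht1
  · rw [dl, dl, he00, he01, he10, he11, hrow0.2, hrow1.2,
      (htr 0).1, (htr 1).1, (htr 0).2, (htr 1).2]
    rw [Matrix.det_mul, Matrix.det_mul, norm_mul, norm_mul,
      (Ip_norms hk).1, mul_one, hdet, norm_mul]
    rw [norm_mul, norm_mul, norm_mul, norm_mul]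
    rw [← mul_max_of_nonneg _ _ (norm_nonneg (t 0 0)),
      ← mul_max_of_nonneg _ _ (norm_nonneg (t 1 1))]
    rw [show ‖t 0 0‖ * max ‖r 0 0‖ ‖r 0 1‖ * (‖t 1 1‖ * max ‖r 1 0‖ ‖r 1 1‖)
        = (‖t 0 0‖ * ‖t 1 1‖) * (max ‖r 0 0‖ ‖r 0 1‖ * max ‖r 1 0‖ ‖r 1 1‖) by ring,
      show ‖t 0 0‖ * ‖t 1 1‖ * ‖r.det‖ = (‖t 0 0‖ * ‖t 1 1‖) * ‖r.det‖ by ring]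
    exact mul_div_mul_left _ _ (by positivity)
end
noncomputable section
open Matrix
variable {p : ℕ} [Fact (Nat.Prime p)]

lemma one_lt_pR : (1:ℝ) < p := by exact_mod_cast (Fact.out : Nat.Prime p).one_lt

lemma norm_P (j : ℕ) : ‖(p:ℚ_[p])^(-(j:ℤ))‖ = (p:ℝ)^(j:ℕ) := by
  rw [Padic.norm_p_zpow, neg_neg, zpow_natCast]

lemma rep_inrl (j : ℕ) :
    rep17 p (Sum.inr (Sum.inl j)) = !![(p:ℚ_[p])^(-(j:ℤ)), 1; 1, 0] := by
  show uMat p j * _ = _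
  rw [uMat, Matrix.mul_fin_two]; norm_num

lemma comp_inl (j : ℕ) : ¬ e1 (rep17 p (Sum.inl j)) ∧
    dl (rep17 p (Sum.inl j)) = ((p:ℝ)^(j:ℕ))⁻¹ := by
  have hP := norm_P (p := p) j
  have h1 : (1:ℝ) ≤ (p:ℝ)^(j:ℕ) := one_le_pow₀ (le_of_lt one_lt_pR)
  constructor
  · show ¬ (‖rep17 p (Sum.inl j) 1 1‖ ≤ ‖rep17 p (Sum.inl j) 1 0‖)
    simp [rep17, uMat]
  · rw [dl]
    show ‖(uMat p j).det‖ / _ = _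
    rw [uMat, Matrix.det_fin_two_of]
    simp [rep17, uMat, hP, max_eq_right h1]

lemma comp_inrl (j : ℕ) : e0 (rep17 p (Sum.inr (Sum.inl j))) ∧
    e1 (rep17 p (Sum.inr (Sum.inl j))) ∧
    dl (rep17 p (Sum.inr (Sum.inl j))) = ((p:ℝ)^(j:ℕ))⁻¹ := by
  have hP := norm_P (p := p) j
  have h1 : (1:ℝ) ≤ (p:ℝ)^(j:ℕ) := one_le_pow₀ (le_of_lt one_lt_pR)
  rw [rep_inrl]
  refine ⟨?_, ?_, ?_⟩
  · show ‖(1:ℚ_[p])‖ ≤ _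
    simpa [hP] using h1
  · show ‖(0:ℚ_[p])‖ ≤ ‖(1:ℚ_[p])‖
    simp
  · rw [dl, Matrix.det_fin_two_of]
    simp [hP, max_eq_left h1]

lemma comp_inrr (u : Unit) : ¬ e0 (rep17 p (Sum.inr (Sum.inr u))) ∧
    e1 (rep17 p (Sum.inr (Sum.inr u))) ∧
    dl (rep17 p (Sum.inr (Sum.inr u))) = 1 := by
  refine ⟨?_, ?_, ?_⟩
  · show ¬ (‖rep17 p _ 0 1‖ ≤ ‖rep17 p _ 0 0‖); simp [rep17]
  · show ‖rep17 p _ 1 1‖ ≤ ‖rep17 p _ 1 0‖; simp [rep17]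
  · rw [dl]
    show ‖(!![0,1;1,0] : Matrix (Fin 2) (Fin 2) ℚ_[p]).det‖ / _ = 1
    rw [Matrix.det_fin_two_of]
    simp [rep17]

lemma rep_inj {c1 c2 : ℕ ⊕ ℕ ⊕ Unit}
    (h0 : e0 (rep17 p c1) ↔ e0 (rep17 p c2))
    (h1 : e1 (rep17 p c1) ↔ e1 (rep17 p c2))
    (h2 : dl (rep17 p c1) = dl (rep17 p c2)) : c1 = c2 := by
  have hinj : ∀ j1 j2 : ℕ, ((p:ℝ)^(j1:ℕ))⁻¹ = ((p:ℝ)^(j2:ℕ))⁻¹ → j1 = j2 := by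
    intro j1 j2 h
    have := inv_injective h
    exact (pow_right_strictMono₀ one_lt_pR).injective this
  match c1, c2 with
  | Sum.inl j1, Sum.inl j2 =>
    rw [(comp_inl j1).2, (comp_inl j2).2] at h2
    exact congrArg Sum.inl (hinj _ _ h2)
  | Sum.inl j1, Sum.inr (Sum.inl j2) =>
    exact absurd ((comp_inrl j2).2.1) (fun hh => (comp_inl j1).1 (h1.mpr hh))
  | Sum.inl j1, Sum.inr (Sum.inr u) =>
    exact absurd ((comp_inrr u).2.1) (fun hh => (comp_inl j1).1 (h1.mpr hh))
  | Sum.inr (Sum.inl j1), Sum.inl j2 =>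
    exact absurd ((comp_inrl j1).2.1) (fun hh => (comp_inl j2).1 (h1.mp hh))
  | Sum.inr (Sum.inr u), Sum.inl j2 =>
    exact absurd ((comp_inrr u).2.1) (fun hh => (comp_inl j2).1 (h1.mp hh))
  | Sum.inr (Sum.inl j1), Sum.inr (Sum.inl j2) =>
    rw [(comp_inrl j1).2.2, (comp_inrl j2).2.2] at h2
    exact congrArg (Sum.inr ∘ Sum.inl) (hinj _ _ h2)
  | Sum.inr (Sum.inl j1), Sum.inr (Sum.inr u) =>
    exact absurd ((comp_inrl j1).1) (fun hh => (comp_inrr u).1 (h0.mp hh))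
  | Sum.inr (Sum.inr u), Sum.inr (Sum.inl j2) =>
    exact absurd ((comp_inrl j2).1) (fun hh => (comp_inrr u).1 (h0.mpr hh))
  | Sum.inr (Sum.inr u), Sum.inr (Sum.inr v) => rfl
end
noncomputable section
open Matrix
variable {p : ℕ} [Fact (Nat.Prime p)]

lemma exists_j {x : ℚ_[p]} (hx : x ≠ 0) (h1 : 1 ≤ ‖x‖) : ∃ j : ℕ, ‖x‖ = (p:ℝ)^(j:ℕ) := by
  rw [Padic.norm_eq_zpow_neg_valuation hx] at h1 ⊢
  have h0 : (0:ℤ) ≤ -x.valuation := by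
    have h := (zpow_right_strictMono₀ (one_lt_pR (p := p))).le_iff_le
      (a := (0:ℤ)) (b := -x.valuation)
    rw [zpow_zero] at h
    exact h.mp h1
  exact ⟨(-x.valuation).toNat, by rw [← zpow_natCast, Int.toNat_of_nonneg h0]⟩

set_option maxHeartbeats 2000000 in
lemma exists_decomp (g : Matrix (Fin 2) (Fin 2) ℚ_[p]) (hg : IsUnit g) :
    ∃ c : ℕ ⊕ ℕ ⊕ Unit, ∃ t k : Matrix (Fin 2) (Fin 2) ℚ_[p],
      (IsUnit t ∧ t 0 1 = 0 ∧ t 1 0 = 0) ∧ k ∈ Ip p ∧ g = t * rep17 p c * k := by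
  have hp0 : (p:ℚ_[p]) ≠ 0 := by exact_mod_cast (Fact.out : Nat.Prime p).ne_zero
  have hD : g.det ≠ 0 := ((Matrix.isUnit_iff_isUnit_det g).mp hg).ne_zero
  have hDf : g.det = g 0 0 * g 1 1 - g 0 1 * g 1 0 := Matrix.det_fin_two g
  have hDn : (0:ℝ) < ‖g.det‖ := norm_pos_iff.mpr hD
  by_cases hcd : ‖g 1 1‖ ≤ ‖g 1 0‖
  · -- B cases : c = g 1 0 ≠ 0
    have hc0 : g 1 0 ≠ 0 := by
      intro h
      rw [h] at hcd
      have hd0 : g 1 1 = 0 := by simpa using hcd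
      rw [hDf, h, hd0] at hD; simp at hD
    have hcn : (0:ℝ) < ‖g 1 0‖ := norm_pos_iff.mpr hc0
    by_cases hB : ‖g.det‖ ≤ ‖g 0 0 * g 1 0‖
    · -- B2 : rep = u_j w
      have ha0 : g 0 0 ≠ 0 := by
        intro h; rw [h] at hB; simp at hB
        exact hD hB
      obtain ⟨j, hj⟩ := exists_j (div_ne_zero (mul_ne_zero ha0 hc0) hD) (by
        rw [norm_div, one_le_div hDn]; exact hB)
      rw [norm_div] at hj
      have hpjne : ((p:ℝ)^(j:ℕ)) ≠ 0 := by have := one_lt_pR (p := p); positivity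
      have hacn : ‖g 0 0 * g 1 0‖ ≠ 0 := (norm_pos_iff.mpr (mul_ne_zero ha0 hc0)).ne'
      have hwnorm : ‖-g.det/(g 0 0 * g 1 0) * (p:ℚ_[p])^(-(j:ℤ))‖ = 1 := by
        rw [norm_mul, norm_div, norm_neg, norm_P, ← hj]
        field_simp
      refine ⟨Sum.inr (Sum.inl j),
        !![g 0 0 * (p:ℚ_[p])^(j:ℤ), 0; 0, g 1 0],
        !![1, g 1 1/g 1 0; 0, -g.det/(g 0 0 * g 1 0) * (p:ℚ_[p])^(-(j:ℤ))],
        ⟨?_, by simp, by simp⟩, ?_, ?_⟩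
      · rw [Matrix.isUnit_iff_isUnit_det, Matrix.det_fin_two_of]
        simp only [mul_zero, zero_mul, sub_zero]
        exact isUnit_iff_ne_zero.mpr
          (mul_ne_zero (mul_ne_zero ha0 (zpow_ne_zero _ hp0)) hc0)
      · refine mem_Ip_aux ?_ ?_ ?_ hwnorm
        · rw [show (1:ℚ_[p]) * (-g.det/(g 0 0 * g 1 0) * (p:ℚ_[p])^(-(j:ℤ)))
              - g 1 1/g 1 0 * 0
              = -g.det/(g 0 0 * g 1 0) * (p:ℚ_[p])^(-(j:ℤ)) by ring]
          exact hwnorm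
        · rw [norm_div, div_le_one hcn]; exact hcd
        · simp
      · rw [rep_inrl, Matrix.mul_fin_two, Matrix.mul_fin_two]
        ext i j'
        fin_cases i <;> fin_cases j' <;>
          simp [← zpow_add₀ hp0] <;> field_simp <;> rw [hDf] <;> ring
    · -- B1 : rep = w
      push_neg at hB
      have hbc : ‖g 0 1 * g 1 0‖ = ‖g.det‖ := by
        have had : ‖g 0 0 * g 1 1‖ < ‖g.det‖ := by
          calc ‖g 0 0 * g 1 1‖ = ‖g 0 0‖ * ‖g 1 1‖ := norm_mul _ _
            _ ≤ ‖g 0 0‖ * ‖g 1 0‖ := mul_le_mul_of_nonneg_left hcd (norm_nonneg _)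
            _ = ‖g 0 0 * g 1 0‖ := (norm_mul _ _).symm
            _ < ‖g.det‖ := hB
        rw [show g 0 1 * g 1 0 = -g.det + g 0 0 * g 1 1 by rw [hDf]; ring,
          norm_add_eq_left (by rw [norm_neg]; exact had), norm_neg]
      refine ⟨Sum.inr (Sum.inr ()),
        !![-g.det/g 1 0, 0; 0, g 1 0],
        !![1, g 1 1/g 1 0; -(g 1 0) * g 0 0/g.det, -(g 1 0) * g 0 1/g.det],
        ⟨?_, by simp, by simp⟩, ?_, ?_⟩
      · rw [Matrix.isUnit_iff_isUnit_det, Matrix.det_fin_two_of]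
        simp only [mul_zero, zero_mul, sub_zero]
        exact isUnit_iff_ne_zero.mpr
          (mul_ne_zero (div_ne_zero (neg_ne_zero.mpr hD) hc0) hc0)
      · refine mem_Ip_aux ?_ ?_ ?_ ?_
        · rw [show (1:ℚ_[p]) * (-(g 1 0) * g 0 1/g.det)
              - g 1 1/g 1 0 * (-(g 1 0) * g 0 0/g.det)
              = (g 0 0 * g 1 1 - g 0 1 * g 1 0)/g.det by field_simp; ring,
            ← hDf, div_self hD]
          simp
        · rw [norm_div, div_le_one hcn]; exact hcd
        · rw [norm_div, norm_mul, norm_neg, div_lt_one hDn,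
            mul_comm ‖g 1 0‖ ‖g 0 0‖, ← norm_mul]
          exact hB
        · rw [norm_div, norm_mul, norm_neg, mul_comm ‖g 1 0‖ ‖g 0 1‖, ← norm_mul,
            hbc, div_self hDn.ne']
      · show g = _ * (!![0,1;1,0]) * _
        rw [Matrix.mul_fin_two, Matrix.mul_fin_two]
        ext i j'
        fin_cases i <;> fin_cases j' <;> simp <;> field_simp <;> rw [hDf] <;> ring
  · -- A cases : ‖g 1 0‖ < ‖g 1 1‖, d ≠ 0
    push_neg at hcd
    have hd0 : g 1 1 ≠ 0 := by
      intro h; rw [h] at hcd; simp at hcd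
      exact absurd hcd (not_lt.mpr (norm_nonneg _))
    have hdn : (0:ℝ) < ‖g 1 1‖ := norm_pos_iff.mpr hd0
    by_cases hA : ‖g 0 1 * g 1 1‖ ≤ ‖g.det‖
    · -- A1 : rep = u_0
      refine ⟨Sum.inl 0,
        !![g.det/g 1 1, 0; 0, g 1 1],
        !![g 1 1 * g 0 0/g.det - g 1 0/g 1 1, g 1 1 * g 0 1/g.det - 1; g 1 0/g 1 1, 1],
        ⟨?_, by simp, by simp⟩, ?_, ?_⟩
      · rw [Matrix.isUnit_iff_isUnit_det, Matrix.det_fin_two_of]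
        simp only [mul_zero, zero_mul, sub_zero]
        exact isUnit_iff_ne_zero.mpr (mul_ne_zero (div_ne_zero hD hd0) hd0)
      · refine mem_Ip_aux ?_ ?_ ?_ (by simp)
        · rw [show (g 1 1 * g 0 0/g.det - g 1 0/g 1 1) * 1
              - (g 1 1 * g 0 1/g.det - 1) * (g 1 0/g 1 1)
              = (g 0 0 * g 1 1 - g 0 1 * g 1 0)/g.det by field_simp; ring,
            ← hDf, div_self hD]
          simp
        · rw [sub_eq_add_neg]
          refine le_trans (Padic.nonarchimedean _ _) (max_le ?_ ?_)
          · rw [norm_div, div_le_one hDn, norm_mul, mul_comm, ← norm_mul]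
            exact hA
          · simp
        · rw [norm_div, div_lt_one hdn]; exact hcd
      · show g = _ * uMat p 0 * _
        rw [uMat, Matrix.mul_fin_two, Matrix.mul_fin_two]
        ext i j'
        fin_cases i <;> fin_cases j' <;> simp <;> field_simp <;> rw [hDf] <;> ring
    · -- A2 : rep = u_j, j ≥ 1
      push_neg at hA
      have hb0 : g 0 1 ≠ 0 := by
        intro h; rw [h] at hA; simp at hA
        exact absurd hA (not_lt.mpr (norm_nonneg _))
      obtain ⟨j, hj⟩ := exists_j (div_ne_zero (mul_ne_zero hb0 hd0) hD) (by
        rw [norm_div, one_le_div hDn]; exact hA.le)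
      rw [norm_div] at hj
      have hpjne : ((p:ℝ)^(j:ℕ)) ≠ 0 := by have := one_lt_pR (p := p); positivity
      refine ⟨Sum.inl j,
        !![g 0 1 * (p:ℚ_[p])^(j:ℤ), 0; 0, g 1 1],
        !![g.det/(g 0 1 * g 1 1) * (p:ℚ_[p])^(-(j:ℤ)), 0; g 1 0/g 1 1, 1],
        ⟨?_, by simp, by simp⟩, ?_, ?_⟩
      · rw [Matrix.isUnit_iff_isUnit_det, Matrix.det_fin_two_of]
        simp only [mul_zero, zero_mul, sub_zero]
        exact isUnit_iff_ne_zero.mpr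
          (mul_ne_zero (mul_ne_zero hb0 (zpow_ne_zero _ hp0)) hd0)
      · refine mem_Ip_aux ?_ (by simp) ?_ (by simp)
        · rw [show (g.det/(g 0 1 * g 1 1) * (p:ℚ_[p])^(-(j:ℤ))) * 1
              - 0 * (g 1 0/g 1 1)
              = g.det/(g 0 1 * g 1 1) * (p:ℚ_[p])^(-(j:ℤ)) by ring,
            norm_mul, norm_div, norm_P, ← hj]
          have hbdn : ‖g 0 1 * g 1 1‖ ≠ 0 := (norm_pos_iff.mpr (mul_ne_zero hb0 hd0)).ne'
          field_simp
        · rw [norm_div, div_lt_one hdn]; exact hcd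
      · show g = _ * uMat p j * _
        rw [uMat, Matrix.mul_fin_two, Matrix.mul_fin_two]
        ext i j'
        fin_cases i <;> fin_cases j' <;>
          simp [← zpow_add₀ hp0] <;> field_simp <;> rw [hDf] <;> ring
end


/-- The double cosets `T u_j I_p` (j ≥ 0), `T u_j w I_p` (j ≥ 0) and `T w I_p` are pairwise
disjoint with union `GL₂(ℚ_p)`, where `T` is the diagonal torus. -/
theorem stmt17 (p : ℕ) [Fact (Nat.Prime p)]
    (g : Matrix (Fin 2) (Fin 2) ℚ_[p]) (hg : IsUnit g) :
    ∃! c : ℕ ⊕ ℕ ⊕ Unit, ∃ t k : Matrix (Fin 2) (Fin 2) ℚ_[p],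
      (IsUnit t ∧ t 0 1 = 0 ∧ t 1 0 = 0) ∧ k ∈ Ip p ∧ g = t * rep17 p c * k := by
  obtain ⟨c₀, t₀, k₀, ht₀, hk₀, heq₀⟩ := exists_decomp g hg
  refine ⟨c₀, ⟨t₀, k₀, ht₀, hk₀, heq₀⟩, ?_⟩
  rintro c' ⟨t', k', ht', hk', heq'⟩
  have I1 := invariant_eq ht₀ hk₀ (r := rep17 p c₀)
  have I2 := invariant_eq ht' hk' (r := rep17 p c')
  rw [← heq₀] at I1
  rw [← heq'] at I2
  exact rep_inj (I2.1.symm.trans I1.1) (I2.2.1.symm.trans I1.2.1)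
    (I2.2.2.symm.trans I1.2.2)
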